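/- Let A be a unital C*-algebra with a faithful trace τ_A, let b, m ≥ 1, and let Tr denote the canonical (unnormalized) traces on M_b(ℂ) and M_m(ℂ). Let L_A, L_B, L_C be [0,∞]-valued seminorms on A, M_b(ℂ), M_m(ℂ) respectively. Let F₁ : A → M_b(ℂ) be unital completely positive, and F₂ : A → M_b(ℂ) completely positive with Tr(F₂(1)) = 1; assume each Fᵢ admits a linear map Fᵢ# : M_b(ℂ) → A with Tr(Fᵢ(a) y) = τ_A(a Fᵢ#(y)) for all a ∈ A, y ∈ M_b(ℂ). Let G₁ : M_b(ℂ) → M_m(ℂ) be completely positive with Tr(G₁(1)) = 1, and G₂ : M_b(ℂ) → M_m(ℂ) completely positive and trace-preserving (Tr(G₂(y)) = Tr(y) for all y), and let G₂# : M_m(ℂ) → M_b(ℂ) be the unique linear map with Tr(G₂(y) z) = Tr(y G₂#(z)) for all y, z. Assume L_B(F₁(a)) ≤ L_A(a) for all a ∈ A and L_B(G₂#(z)) ≤ L_C(z) for all z ∈ M_m(ℂ). Define functionals: for linear H : A → M_m(ℂ), ω_m(H) on M_m(A) by ω_m(H)(X) = Σ_{r,s} (H(X r s)) r s; for linear H :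 A → M_b(ℂ), ω_b(H) on M_b(A) analogously; for linear G : M_b(ℂ) → M_m(ℂ), Ω(G) on Matrix (Fin b × Fin m) (Fin b × Fin m) ℂ by Ω(G)(Y) = Σ_{p,q,r,s} Y (p,r) (q,s) · (G(E_{pq})) r s. Define induced seminorms: 𝕄 on M_m(A) by 𝕄(X) = sup_{ψ ∈ S(M_m(ℂ))} L_A(Σ_{r,s} ψ(E_{rs}) • X r s) + sup_{φ ∈ S(A)} L_C((r,s) ↦ φ(X s r)); 𝕃 on M_b(A) by the same formula with M_b-indices and L_B in place of L_C; and 𝕂 on Matrix (Fin b × Fin m) (Fin b × Fin m) ℂ by 𝕂(Y) = sup_{ψ ∈ S(M_m(ℂ))} L_B((p,q) ↦ Σ_{r,s} ψ(E_{rs}) Y (p,r) (q,s)) + sup_{χ ∈ S(M_b(ℂ))} L_C((r,s) ↦ Σ_{p,q} χ(E_{pq}) Y (p,s) (q,r)). Then: sup{ |ω_m(G₁∘F₁)(X) − ω_m(G₂∘F₂)(X)| : X ∈ M_m(A), 𝕄(X) ≤ 1 } ≤ sup{ |Ω(G₁)(Y) − Ω(G₂)(Y)| : 𝕂(Y) ≤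 1 } + sup{ |ω_b(F₁)(X') − ω_b(F₂)(X')| : X' ∈ M_b(A), 𝕃(X') ≤ 1 }. -/

import Mathlib

open scoped ComplexOrder ENNReal
open Finset

/-- A state on a unital complex *-algebra: a positive unital linear functional. -/
def IsState {D : Type*} [Ring D] [StarRing D] [Module ℂ D] (φ : D →ₗ[ℂ] ℂ) : Prop :=
  (∀ d : D, 0 ≤ φ (star d * d)) ∧ φ 1 = 1

/-- A linear map `F : A → B` is completely positive if for every `n`, applying `F` entrywise
to `M_n(A)` maps positive elements (elements of the form `y⋆ y`) to positive elements. -/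
def IsCompletelyPositive {A B : Type*}
    [NonUnitalSemiring A] [StarRing A] [Module ℂ A]
    [NonUnitalSemiring B] [StarRing B] [Module ℂ B] (F : A →ₗ[ℂ] B) : Prop :=
  ∀ (n : ℕ) (M : Matrix (Fin n) (Fin n) A),
    (∃ Y : Matrix (Fin n) (Fin n) A, M = star Y * Y) →
    ∃ Z : Matrix (Fin n) (Fin n) B, M.map F = star Z * Z

/-- The Monge–Kantorovič distance associated to a `[0,∞]`-valued seminorm. -/
noncomputable def mkDist {V : Type*} (L : V → ℝ≥0∞) (φ ψ : V → ℂ) : ℝ≥0∞ :=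
  ⨆ (x : V) (_ : L x ≤ 1), (‖φ x - ψ x‖₊ : ℝ≥0∞)

/-- The Choi–Jamiolkowski functional of a linear map `H : A → M_k(ℂ)`, as a functional on
`M_k(A)`: `ω(H)(X) = Σ_{r,s} (H (X r s)) r s`. -/
noncomputable def omegaMat {A : Type*} [AddCommMonoid A] [Module ℂ A] {k : ℕ}
    (H : A →ₗ[ℂ] Matrix (Fin k) (Fin k) ℂ) : Matrix (Fin k) (Fin k) A → ℂ :=
  fun X => ∑ r, ∑ s, (H (X r s)) r s

/-- The Choi–Jamiolkowski functional of a linear map `G : M_b(ℂ) → M_m(ℂ)`, as a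
functional on `Matrix (Fin b × Fin m) (Fin b × Fin m) ℂ`:
`Ω(G)(Y) = Σ_{p,q,r,s} Y (p,r) (q,s) * (G (E_{pq})) r s`. -/
noncomputable def OmegaMat {b m : ℕ}
    (G : Matrix (Fin b) (Fin b) ℂ →ₗ[ℂ] Matrix (Fin m) (Fin m) ℂ) :
    Matrix (Fin b × Fin m) (Fin b × Fin m) ℂ → ℂ :=
  fun Y => ∑ p, ∑ q, ∑ r, ∑ s,
    Y (p, r) (q, s) * (G (Matrix.single p q 1)) r s

/-- The induced tensor seminorm on `M_k(A)` built from a seminorm `LA` on `A` and a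
seminorm `LK` on `M_k(ℂ)`. -/
noncomputable def inducedSeminorm {A : Type*} [Ring A] [StarRing A] [Module ℂ A] {k : ℕ}
    (LA : A → ℝ≥0∞) (LK : Matrix (Fin k) (Fin k) ℂ → ℝ≥0∞) :
    Matrix (Fin k) (Fin k) A → ℝ≥0∞ := fun X =>
  (⨆ (ψ : Matrix (Fin k) (Fin k) ℂ →ₗ[ℂ] ℂ) (_ : IsState ψ),
      LA (∑ r, ∑ s, ψ (Matrix.single r s 1) • X r s)) +
    (⨆ (φ : A →ₗ[ℂ] ℂ) (_ : IsState φ), LK (Matrix.of fun r s => φ (X s r)))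

/-- The induced tensor seminorm `𝕂` on `Matrix (Fin b × Fin m) (Fin b × Fin m) ℂ` built
from seminorms `LB` on `M_b(ℂ)` and `LC` on `M_m(ℂ)`. -/
noncomputable def inducedSeminormK {b m : ℕ}
    (LB : Matrix (Fin b) (Fin b) ℂ → ℝ≥0∞) (LC : Matrix (Fin m) (Fin m) ℂ → ℝ≥0∞) :
    Matrix (Fin b × Fin m) (Fin b × Fin m) ℂ → ℝ≥0∞ := fun Y =>
  (⨆ (ψ : Matrix (Fin m) (Fin m) ℂ →ₗ[ℂ] ℂ) (_ : IsState ψ),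
      LB (Matrix.of fun p q =>
        ∑ r, ∑ s, ψ (Matrix.single r s 1) * Y (p, r) (q, s))) +
    (⨆ (χ : Matrix (Fin b) (Fin b) ℂ →ₗ[ℂ] ℂ) (_ : IsState χ),
      LC (Matrix.of fun r s =>
        ∑ p, ∑ q, χ (Matrix.single p q 1) * Y (p, s) (q, r)))

namespace ChainAux
open Matrix

variable {k l : ℕ}

lemma lin_apply_decomp {V : Type*} [AddCommMonoid V] [Module ℂ V]
    (H : Matrix (Fin k) (Fin k) ℂ →ₗ[ℂ] V) (y : Matrix (Fin k) (Fin k) ℂ) :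
    H y = ∑ p, ∑ q, y p q • H (Matrix.single p q 1) := by
  conv_lhs => rw [matrix_eq_sum_single y]
  rw [map_sum]
  refine Finset.sum_congr rfl fun p _ => ?_
  rw [map_sum]
  refine Finset.sum_congr rfl fun q _ => ?_
  rw [← _root_.map_smul, smul_single, smul_eq_mul, mul_one]

lemma trace_mul_single (M : Matrix (Fin k) (Fin k) ℂ) (r s : Fin k) :
    (M * Matrix.single s r 1).trace = M r s := by
  simp [Matrix.trace, Matrix.diag, Matrix.mul_apply, Matrix.single, Matrix.of_apply,
    Finset.sum_ite_eq, ite_and]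

lemma trace_single_mul (M : Matrix (Fin k) (Fin k) ℂ) (p q : Fin k) :
    (Matrix.single p q 1 * M).trace = M q p := by
  rw [Matrix.trace_mul_comm, trace_mul_single]

lemma trace_eq (M N : Matrix (Fin k) (Fin k) ℂ) :
    (M * N).trace = ∑ p, ∑ q, M p q * N q p := by
  simp [Matrix.trace, Matrix.diag, Matrix.mul_apply]

lemma trace_conjTranspose_mul_self_nonneg (C : Matrix (Fin k) (Fin l) ℂ) :
    0 ≤ (Cᴴ * C).trace := by
  rw [Matrix.trace]
  refine Finset.sum_nonneg fun i _ => ?_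
  simp only [Matrix.diag, Matrix.mul_apply, Matrix.conjTranspose_apply]
  exact Finset.sum_nonneg fun j _ => star_mul_self_nonneg _

lemma sum_swap4 {α β γ δ M : Type*} [Fintype α] [Fintype β] [Fintype γ] [Fintype δ]
    [AddCommMonoid M] (f : α → β → γ → δ → M) :
    ∑ a, ∑ b, ∑ c, ∑ d, f a b c d = ∑ c, ∑ d, ∑ a, ∑ b, f a b c d := by
  calc ∑ a, ∑ b, ∑ c, ∑ d, f a b c d
      = ∑ a, ∑ c, ∑ b, ∑ d, f a b c d :=
        Finset.sum_congr rfl fun a _ => Finset.sum_comm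
    _ = ∑ c, ∑ a, ∑ b, ∑ d, f a b c d := Finset.sum_comm
    _ = ∑ c, ∑ a, ∑ d, ∑ b, f a b c d :=
        Finset.sum_congr rfl fun c _ => Finset.sum_congr rfl fun a _ => Finset.sum_comm
    _ = ∑ c, ∑ d, ∑ a, ∑ b, f a b c d :=
        Finset.sum_congr rfl fun c _ => Finset.sum_comm

lemma quadratic_psd (M : Matrix (Fin k) (Fin k) ℂ)
    (h : ∀ v : Fin k → ℂ, 0 ≤ star v ⬝ᵥ M *ᵥ v) : M.PosSemidef := by
  have him : ∀ v : Fin k → ℂ, (star v ⬝ᵥ M *ᵥ v).im = 0 := by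
    intro v
    have := h v
    rw [Complex.le_def] at this
    exact this.2.symm
  have key : ∀ v w : Fin k → ℂ, star w ⬝ᵥ M *ᵥ v = (starRingEnd ℂ) (star v ⬝ᵥ M *ᵥ w) := by
    intro v w
    set z := star v ⬝ᵥ M *ᵥ w with hz
    set u := star w ⬝ᵥ M *ᵥ v with hu
    have expand : ∀ c : ℂ, star (v + c • w) ⬝ᵥ M *ᵥ (v + c • w)
        = star v ⬝ᵥ M *ᵥ v + c * z + (starRingEnd ℂ) c * u
          + ((starRingEnd ℂ) c * c) * (star w ⬝ᵥ M *ᵥ w) := by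
      intro c
      rw [star_add, star_smul, Matrix.mulVec_add, Matrix.mulVec_smul,
        add_dotProduct, dotProduct_add, dotProduct_add,
        smul_dotProduct, dotProduct_smul, dotProduct_smul, smul_dotProduct]
      simp only [starRingEnd_apply, smul_eq_mul]
      ring
    have h1 : (z + u).im = 0 := by
      have := him (v + (1 : ℂ) • w)
      rw [expand 1] at this
      simpa [him v, him w] using this
    have h2 : (Complex.I * z - Complex.I * u).im = 0 := by
      have := him (v + Complex.I • w)
      rw [expand Complex.I] at this
      simp only [Complex.add_im, him v, him w] at this ⊢
      rw [Complex.conj_I] at this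
      have h3 : (Complex.I * z).im + (-Complex.I * u).im = 0 := by
        simpa [him v, him w] using this
      simpa [sub_eq_add_neg] using h3
    apply Complex.ext
    · have := h2
      simp only [Complex.sub_im, Complex.mul_im, Complex.I_re, Complex.I_im] at this
      simp only [Complex.conj_re]
      linarith
    · have := h1
      simp only [Complex.add_im] at this
      simp only [Complex.conj_im]
      linarith
  refine Matrix.PosSemidef.of_dotProduct_mulVec_nonneg ?_ h
  ext i j
  have := key (Pi.single j 1) (Pi.single i 1)
  simp only [dotProduct, Matrix.mulVec_single, Pi.star_apply, Pi.single_apply,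
    apply_ite (star : ℂ → ℂ), star_one, star_zero, ite_mul, one_mul, zero_mul, mul_one,
    mul_zero, Finset.sum_ite_eq, Finset.mem_univ, if_true] at this
  simpa [Matrix.conjTranspose_apply] using this.symm

lemma cp_one {A B : Type*}
    [NonUnitalSemiring A] [StarRing A] [Module ℂ A]
    [NonUnitalSemiring B] [StarRing B] [Module ℂ B] {F : A →ₗ[ℂ] B}
    (hF : IsCompletelyPositive F) (a : A) : ∃ w : B, F (star a * a) = star w * w := by
  obtain ⟨Z, hZ⟩ := hF 1 (Matrix.of fun _ _ => star a * a)
    ⟨Matrix.of fun _ _ => a, by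
      ext i j
      simp [Matrix.mul_apply, Matrix.star_apply, Fin.sum_univ_one]⟩
  refine ⟨Z 0 0, ?_⟩
  have h00 := congrFun (congrFun hZ 0) 0
  simpa [Matrix.map_apply, Matrix.mul_apply, Matrix.star_apply, Fin.sum_univ_one] using h00

lemma psd_transpose {N : Matrix (Fin k) (Fin k) ℂ} (hN : N.PosSemidef) :
    Nᵀ.PosSemidef := by
  apply quadratic_psd
  intro v
  have h := hN.dotProduct_mulVec_nonneg (star v)
  have heq : star v ⬝ᵥ Nᵀ *ᵥ v = star (star v) ⬝ᵥ N *ᵥ (star v) := by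
    simp only [dotProduct, Matrix.mulVec, Pi.star_apply, star_star,
      Matrix.transpose_apply, Finset.mul_sum]
    rw [Finset.sum_comm]
    exact Finset.sum_congr rfl fun i _ => Finset.sum_congr rfl fun j _ => by ring
  rw [heq]; exact h

open scoped MatrixOrder in
lemma psd_exists {P : Matrix (Fin k) (Fin k) ℂ} (hP : P.PosSemidef) :
    ∃ d : Matrix (Fin k) (Fin k) ℂ, P = star d * d := by
  exact CStarAlgebra.nonneg_iff_eq_star_mul_self.mp hP.nonneg

lemma transpose_single (r s : Fin k) :
    (Matrix.single r s (1:ℂ))ᵀ = Matrix.single s r 1 := by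
  ext i j
  simp [Matrix.single, and_comm]

lemma star_mul_self_transpose (z : Matrix (Fin k) (Fin k) ℂ) :
    (star z * z)ᵀ = star ((star z)ᵀ) * (star z)ᵀ := by
  ext i j
  simp only [Matrix.transpose_apply, Matrix.mul_apply, Matrix.star_apply,
    Matrix.star_eq_conjTranspose, Matrix.conjTranspose_apply, Matrix.transpose_apply, star_star]
  exact Finset.sum_congr rfl fun t _ => mul_comm _ _

lemma sharp_psd {b m : ℕ} (hb : 1 ≤ b)
    {G : Matrix (Fin b) (Fin b) ℂ →ₗ[ℂ] Matrix (Fin m) (Fin m) ℂ}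
    (hG : IsCompletelyPositive G)
    {Gs : Matrix (Fin m) (Fin m) ℂ →ₗ[ℂ] Matrix (Fin b) (Fin b) ℂ}
    (hadj : ∀ (y : Matrix (Fin b) (Fin b) ℂ) (z : Matrix (Fin m) (Fin m) ℂ),
      (G y * z).trace = (y * Gs z).trace)
    {P : Matrix (Fin m) (Fin m) ℂ} (hP : P.PosSemidef) : (Gs P).PosSemidef := by
  apply quadratic_psd
  intro v
  set x0 : Fin b := ⟨0, hb⟩ with hx0
  set u : Matrix (Fin b) (Fin b) ℂ :=
    Matrix.of (fun x y => if x = x0 then star (v y) else 0) with hu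
  have hWentry : ∀ p q, (star u * u) p q = v p * star (v q) := by
    intro p q
    simp only [Matrix.mul_apply, Matrix.star_apply, hu, Matrix.of_apply,
      apply_ite (star : ℂ → ℂ), star_star, star_zero, ite_mul, zero_mul, mul_ite, mul_zero,
      Finset.sum_ite_eq', Finset.mem_univ, if_true]
  have hW : star v ⬝ᵥ (Gs P) *ᵥ v = ((star u * u) * Gs P).trace := by
    rw [trace_eq]
    simp only [hWentry, dotProduct, Matrix.mulVec, Pi.star_apply, Finset.mul_sum]
    rw [Finset.sum_comm]
    exact Finset.sum_congr rfl fun p _ => Finset.sum_congr rfl fun q _ => by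
      simp [dotProduct]; ring
  rw [hW, ← hadj]
  obtain ⟨w, hw⟩ := cp_one hG u
  rw [hw]
  obtain ⟨B, hB⟩ := psd_exists hP
  rw [hB]
  have e1 : star w * w * (star B * B) = (star w * w * star B) * B := by
    noncomm_ring
  rw [e1, Matrix.trace_mul_comm]
  have e2 : B * (star w * w * star B) = (w * star B)ᴴ * (w * star B) := by
    simp only [Matrix.star_eq_conjTranspose, Matrix.conjTranspose_mul,
      Matrix.conjTranspose_conjTranspose]
    noncomm_ring
  rw [e2]
  exact trace_conjTranspose_mul_self_nonneg _

end ChainAux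

open ChainAux Matrix

/-- The chaining inequality for the Monge–Kantorovič metrics induced
via the Choi–Jamiolkowski functionals, for channels `A → M_b(ℂ) → M_m(ℂ)`. -/
theorem chaining_inequality
    (A : Type*) [CStarAlgebra A]
    (τA : A →ₗ[ℂ] ℂ) (hτA_ne : τA ≠ 0)
    (hτA_pos : ∀ a : A, 0 ≤ τA (star a * a))
    (hτA_tracial : ∀ a₁ a₂ : A, τA (a₁ * a₂) = τA (a₂ * a₁))
    (hτA_faithful : ∀ a : A, τA (star a * a) = 0 → a = 0)
    (b m : ℕ) (hb : 1 ≤ b) (hm : 1 ≤ m)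
    (LA : A → ℝ≥0∞)
    (hLA_add : ∀ x y : A, LA (x + y) ≤ LA x + LA y)
    (hLA_smul : ∀ (c : ℂ), c ≠ 0 → ∀ x : A, LA (c • x) = (‖c‖₊ : ℝ≥0∞) * LA x)
    (LB : Matrix (Fin b) (Fin b) ℂ → ℝ≥0∞)
    (hLB_add : ∀ x y, LB (x + y) ≤ LB x + LB y)
    (hLB_smul : ∀ (c : ℂ), c ≠ 0 → ∀ x, LB (c • x) = (‖c‖₊ : ℝ≥0∞) * LB x)
    (LC : Matrix (Fin m) (Fin m) ℂ → ℝ≥0∞)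
    (hLC_add : ∀ x y, LC (x + y) ≤ LC x + LC y)
    (hLC_smul : ∀ (c : ℂ), c ≠ 0 → ∀ x, LC (c • x) = (‖c‖₊ : ℝ≥0∞) * LC x)
    (F₁ : A →ₗ[ℂ] Matrix (Fin b) (Fin b) ℂ)
    (hF₁_cp : IsCompletelyPositive F₁) (hF₁_unital : F₁ 1 = 1)
    (F₂ : A →ₗ[ℂ] Matrix (Fin b) (Fin b) ℂ)
    (hF₂_cp : IsCompletelyPositive F₂) (hF₂_tr : Matrix.trace (F₂ 1) = 1)
    (F₁sharp : Matrix (Fin b) (Fin b) ℂ →ₗ[ℂ] A)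
    (hF₁_adj : ∀ (a : A) (y : Matrix (Fin b) (Fin b) ℂ),
      Matrix.trace (F₁ a * y) = τA (a * F₁sharp y))
    (F₂sharp : Matrix (Fin b) (Fin b) ℂ →ₗ[ℂ] A)
    (hF₂_adj : ∀ (a : A) (y : Matrix (Fin b) (Fin b) ℂ),
      Matrix.trace (F₂ a * y) = τA (a * F₂sharp y))
    (G₁ : Matrix (Fin b) (Fin b) ℂ →ₗ[ℂ] Matrix (Fin m) (Fin m) ℂ)
    (hG₁_cp : IsCompletelyPositive G₁) (hG₁_tr : Matrix.trace (G₁ 1) = 1)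
    (G₂ : Matrix (Fin b) (Fin b) ℂ →ₗ[ℂ] Matrix (Fin m) (Fin m) ℂ)
    (hG₂_cp : IsCompletelyPositive G₂)
    (hG₂_trPres : ∀ y : Matrix (Fin b) (Fin b) ℂ, Matrix.trace (G₂ y) = Matrix.trace y)
    (G₂sharp : Matrix (Fin m) (Fin m) ℂ →ₗ[ℂ] Matrix (Fin b) (Fin b) ℂ)
    (hG₂_adj : ∀ (y : Matrix (Fin b) (Fin b) ℂ) (z : Matrix (Fin m) (Fin m) ℂ),
      Matrix.trace (G₂ y * z) = Matrix.trace (y * G₂sharp z))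
    (hLip_F₁ : ∀ a : A, LB (F₁ a) ≤ LA a)
    (hLip_G₂sharp : ∀ z : Matrix (Fin m) (Fin m) ℂ, LB (G₂sharp z) ≤ LC z) :
    mkDist (inducedSeminorm LA LC) (omegaMat (G₁ ∘ₗ F₁)) (omegaMat (G₂ ∘ₗ F₂)) ≤
      mkDist (inducedSeminormK LB LC) (OmegaMat G₁) (OmegaMat G₂) +
        mkDist (inducedSeminorm LA LB) (omegaMat F₁) (omegaMat F₂) := by
  classical
  have hG2s_one : G₂sharp 1 = 1 := by
    ext q p
    have h1 := hG₂_adj (Matrix.single p q 1) 1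
    rw [mul_one, hG₂_trPres, ChainAux.trace_single_mul] at h1
    rw [← h1]
    by_cases h : p = q
    · subst h
      simp [Matrix.trace, Matrix.diag, Matrix.single, Matrix.one_apply, ite_and,
        Finset.sum_ite_eq]
    · simp [Matrix.trace, Matrix.diag, Matrix.single, Matrix.one_apply, ite_and,
        Finset.sum_ite_eq, h, Ne.symm h]
  simp only [mkDist]
  refine iSup₂_le fun X hX => ?_
  set Y : Matrix (Fin b × Fin m) (Fin b × Fin m) ℂ :=
    Matrix.of (fun pr qs => (F₁ (X pr.2 qs.2)) pr.1 qs.1) with hYdef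
  set X' : Matrix (Fin b) (Fin b) A :=
    Matrix.of (fun p q => ∑ r, ∑ s,
      (G₂sharp (Matrix.single s r 1)) q p • X r s) with hX'def
  have hE1 : ∀ G : Matrix (Fin b) (Fin b) ℂ →ₗ[ℂ] Matrix (Fin m) (Fin m) ℂ,
      OmegaMat G Y = omegaMat (G ∘ₗ F₁) X := by
    intro G
    simp only [OmegaMat, omegaMat, LinearMap.comp_apply, hYdef, Matrix.of_apply]
    rw [ChainAux.sum_swap4]
    refine Finset.sum_congr rfl fun r _ => Finset.sum_congr rfl fun s _ => ?_
    rw [ChainAux.lin_apply_decomp G (F₁ (X r s))]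
    simp [Matrix.sum_apply]
  have hE2 : ∀ F : A →ₗ[ℂ] Matrix (Fin b) (Fin b) ℂ,
      omegaMat F X' = omegaMat (G₂ ∘ₗ F) X := by
    intro F
    simp only [omegaMat, LinearMap.comp_apply, hX'def, Matrix.of_apply]
    have lhs_eq : ∀ p q : Fin b, (F (∑ r, ∑ s,
        (G₂sharp (Matrix.single s r 1)) q p • X r s)) p q
        = ∑ r, ∑ s, (G₂sharp (Matrix.single s r 1)) q p * (F (X r s)) p q := by
      intro p q
      simp [map_sum, _root_.map_smul, Matrix.sum_apply, Matrix.smul_apply, smul_eq_mul]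
    simp only [lhs_eq]
    rw [ChainAux.sum_swap4]
    refine Finset.sum_congr rfl fun r _ => Finset.sum_congr rfl fun s _ => ?_
    rw [← ChainAux.trace_mul_single (G₂ (F (X r s))) r s, hG₂_adj, ChainAux.trace_eq]
    exact Finset.sum_congr rfl fun p _ => Finset.sum_congr rfl fun q _ => mul_comm _ _
  have hB1 : inducedSeminormK LB LC Y ≤ inducedSeminorm LA LC X := by
    simp only [inducedSeminormK, inducedSeminorm]
    refine add_le_add ?_ ?_
    · refine iSup₂_le fun ψ hψ => le_iSup₂_of_le ψ hψ (le_of_eq_of_le ?_ (hLip_F₁ _))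
      congr 1
      ext p q
      simp only [hYdef, Matrix.of_apply, map_sum, _root_.map_smul, Matrix.sum_apply,
        Matrix.smul_apply, smul_eq_mul]
    · refine iSup₂_le fun χ hχ => ?_
      have hstate : IsState (χ ∘ₗ F₁) := by
        constructor
        · intro a
          obtain ⟨w, hw⟩ := ChainAux.cp_one hF₁_cp a
          simpa [LinearMap.comp_apply, hw] using hχ.1 w
        · simp [LinearMap.comp_apply, hF₁_unital, hχ.2]
      refine le_iSup₂_of_le (χ ∘ₗ F₁) hstate (le_of_eq ?_)
      congr 1
      ext r s
      simp only [hYdef, Matrix.of_apply, LinearMap.comp_apply]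
      rw [ChainAux.lin_apply_decomp χ (F₁ (X s r))]
      exact Finset.sum_congr rfl fun p _ => Finset.sum_congr rfl fun q _ => by
        rw [smul_eq_mul, mul_comm]
  have hB2 : inducedSeminorm LA LB X' ≤ inducedSeminorm LA LC X := by
    simp only [inducedSeminorm]
    refine add_le_add ?_ ?_
    · refine iSup₂_le fun ψ hψ => ?_
      set T1 := (Matrix.transposeLinearEquiv (Fin m) (Fin m) ℂ ℂ).toLinearMap with hT1
      set T2 := (Matrix.transposeLinearEquiv (Fin b) (Fin b) ℂ ℂ).toLinearMap with hT2
      set ψ' : Matrix (Fin m) (Fin m) ℂ →ₗ[ℂ] ℂ := ψ ∘ₗ T2 ∘ₗ G₂sharp ∘ₗ T1 with hψ'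
      have hψ'apply : ∀ z : Matrix (Fin m) (Fin m) ℂ, ψ' z = ψ ((G₂sharp zᵀ)ᵀ) := fun z => rfl
      have hψ'state : IsState ψ' := by
        constructor
        · intro z
          rw [hψ'apply]
          have h1 : ((star z * z)ᵀ).PosSemidef := by
            rw [ChainAux.star_mul_self_transpose, Matrix.star_eq_conjTranspose]
            exact Matrix.posSemidef_conjTranspose_mul_self _
          have h2 := ChainAux.sharp_psd hb hG₂_cp hG₂_adj h1
          have h3 := ChainAux.psd_transpose h2
          obtain ⟨d, hd⟩ := ChainAux.psd_exists h3
          rw [hd]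
          exact hψ.1 d
        · rw [hψ'apply]
          simp [Matrix.transpose_one, hG2s_one, hψ.2]
      refine le_iSup₂_of_le ψ' hψ'state (le_of_eq ?_)
      congr 1
      simp only [hX'def, Matrix.of_apply]
      have step : ∀ p q : Fin b, ψ (Matrix.single p q 1) •
          (∑ r, ∑ s, (G₂sharp (Matrix.single s r 1)) q p • X r s)
          = ∑ r, ∑ s, (ψ (Matrix.single p q 1)
              * (G₂sharp (Matrix.single s r 1)) q p) • X r s := by
        intro p q
        rw [Finset.smul_sum]
        refine Finset.sum_congr rfl fun r _ => ?_
        rw [Finset.smul_sum]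
        exact Finset.sum_congr rfl fun s _ => (smul_smul _ _ _)
      simp only [step]
      rw [ChainAux.sum_swap4]
      refine Finset.sum_congr rfl fun r _ => Finset.sum_congr rfl fun s _ => ?_
      simp only [← Finset.sum_smul]
      congr 1
      rw [hψ'apply, ChainAux.transpose_single,
        ChainAux.lin_apply_decomp ψ ((G₂sharp (Matrix.single s r 1))ᵀ)]
      simp only [Matrix.transpose_apply, smul_eq_mul]
      exact Finset.sum_congr rfl fun p _ => Finset.sum_congr rfl fun q _ => mul_comm _ _
    · refine iSup₂_le fun φ hφ => le_iSup₂_of_le φ hφ ?_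
      have heq : (Matrix.of fun p q => φ (X' q p))
          = G₂sharp (Matrix.of fun r s => φ (X s r)) := by
        rw [ChainAux.lin_apply_decomp G₂sharp]
        ext p q
        simp only [hX'def, Matrix.of_apply, map_sum, _root_.map_smul, Matrix.sum_apply,
          Matrix.smul_apply, smul_eq_mul]
        rw [Finset.sum_comm]
        exact Finset.sum_congr rfl fun r _ => Finset.sum_congr rfl fun s _ => mul_comm _ _
      rw [heq]
      exact hLip_G₂sharp _
  have hYK : inducedSeminormK LB LC Y ≤ 1 := le_trans hB1 hX
  have hX'L : inducedSeminorm LA LB X' ≤ 1 := le_trans hB2 hX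
  have key : omegaMat (G₁ ∘ₗ F₁) X - omegaMat (G₂ ∘ₗ F₂) X
      = (OmegaMat G₁ Y - OmegaMat G₂ Y) + (omegaMat F₁ X' - omegaMat F₂ X') := by
    rw [hE1 G₁, hE1 G₂, hE2 F₁, hE2 F₂]
    ring
  calc (‖omegaMat (G₁ ∘ₗ F₁) X - omegaMat (G₂ ∘ₗ F₂) X‖₊ : ℝ≥0∞)
      = ‖(OmegaMat G₁ Y - OmegaMat G₂ Y) + (omegaMat F₁ X' - omegaMat F₂ X')‖₊ := by
        rw [key]
    _ ≤ (‖OmegaMat G₁ Y - OmegaMat G₂ Y‖₊ : ℝ≥0∞)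
        + (‖omegaMat F₁ X' - omegaMat F₂ X'‖₊ : ℝ≥0∞) := by
        exact_mod_cast nnnorm_add_le _ _
    _ ≤ _ := add_le_add
        (le_iSup₂ (f := fun x (_ : inducedSeminormK LB LC x ≤ 1) =>
          (‖OmegaMat G₁ x - OmegaMat G₂ x‖₊ : ℝ≥0∞)) Y hYK)
        (le_iSup₂ (f := fun x (_ : inducedSeminorm LA LB x ≤ 1) =>
          (‖omegaMat F₁ x - omegaMat F₂ x‖₊ : ℝ≥0∞)) X' hX'L)
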